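/- Let A be a commutative Noetherian ring and B a commutative Noetherian A-algebra. Let I ⊆ B be an ideal such that B/I is a finitely generated flat A-module. Let p₀ be a prime ideal of A and suppose f ∈ I is an element such that B/fB is a finitely generated A-module and such that the image of I in B ⊗_A κ(p₀) generates the same ideal as the image of f. Then there exists g ∈ A with g ∉ p₀ such that, after inverting g, the ideal I becomes principal generated by f: I · B[1/g] = f · B[1/g], where B[1/g] = B ⊗_A A[1/g]. -/
import Mathlib


open TensorProduct

/-- The residue field `κ(p)` of the prime spectrum point `p`. -/
abbrev residueFieldAt {R : Type*} [CommRing R] (p : PrimeSpectrum R) : Type _ :=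
  IsLocalRing.ResidueField (Localization.AtPrime p.asIdeal)

set_option maxHeartbeats 1000000 in
/-- Let `A` be a commutative Noetherian ring, `B` a commutative Noetherian `A`-algebra and
`I ⊆ B` an ideal with `B/I` a finitely generated flat `A`-module.  Let `p₀` be a prime of `A`
and `f ∈ I` such that `B/fB` is a finitely generated `A`-module and the image of `I` in the
fiber ring `B ⊗_A κ(p₀)` generates the same ideal as the image of `f`.  Then there is
`g ∈ A`, `g ∉ p₀`, such that `I · B[1/g] = f · B[1/g]`, where `B[1/g] = B ⊗_A A[1/g]` is the
localization of `B` away from the image of `g`. -/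
theorem ideal_principal_on_basic_open
    (A : Type*) [CommRing A] [IsNoetherianRing A]
    (B : Type*) [CommRing B] [Algebra A B] [IsNoetherianRing B]
    (I : Ideal B)
    [Module.Finite A (B ⧸ I)] [Module.Flat A (B ⧸ I)]
    (p₀ : PrimeSpectrum A)
    (f : B) (hfI : f ∈ I)
    [Module.Finite A (B ⧸ Ideal.span {f})]
    (hfiber :
      Ideal.map
          (Algebra.TensorProduct.includeRight :
            B →ₐ[A] residueFieldAt p₀ ⊗[A] B) I
        = Ideal.span
            {(Algebra.TensorProduct.includeRight :
              B →ₐ[A] residueFieldAt p₀ ⊗[A] B) f}) :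
    ∃ g : A, g ∉ p₀.asIdeal ∧
      Ideal.map (algebraMap B (Localization.Away (algebraMap A B g))) I
        = Ideal.span {algebraMap B (Localization.Away (algebraMap A B g)) f} := by
  classical
  set J : Ideal B := Ideal.span {f} with hJdef
  have hJI : J ≤ I := by
    rw [hJdef, Ideal.span_le, Set.singleton_subset_iff]; exact hfI
  set κ := residueFieldAt p₀ with hκdef
  set R' := Localization.AtPrime p₀.asIdeal with hR'def
  -- the A-submodule `N = I/fB` of `B/fB`
  set N : Submodule A (B ⧸ J) :=
    Submodule.restrictScalars A (Ideal.map (Ideal.Quotient.mk J) I) with hNdef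
  -- the projection `π : B/fB → B/I`
  set π : (B ⧸ J) →ₐ[A] (B ⧸ I) :=
    Ideal.quotientMapₐ I (AlgHom.id A B) (by simpa using hJI) with hπdef
  have hπmk : ∀ b : B, π (Ideal.Quotient.mk J b) = Ideal.Quotient.mk I b := fun b => rfl
  have hker : LinearMap.ker π.toLinearMap = N := by
    ext x
    obtain ⟨b, rfl⟩ := Ideal.Quotient.mk_surjective x
    simp only [LinearMap.mem_ker, AlgHom.toLinearMap_apply, hπmk]
    rw [Ideal.Quotient.eq_zero_iff_mem]
    constructor
    · intro hb
      exact (Ideal.mem_quotient_iff_mem hJI).mpr hb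
    · intro hb
      exact (Ideal.mem_quotient_iff_mem hJI).mp hb
  -- `B/I` is projective, so the surjection `π` splits
  haveI : Module.FinitePresentation A (B ⧸ I) := Module.finitePresentation_of_finite A _
  haveI hProj : Module.Projective A (B ⧸ I) :=
    (Module.freeLocus_eq_univ_iff (R := A) (M := B ⧸ I)).mp
      (Module.freeLocus_eq_univ (R := A) (M := B ⧸ I))
  have hπsurj : Function.Surjective π.toLinearMap := by
    intro y
    obtain ⟨b, rfl⟩ := Ideal.Quotient.mk_surjective y
    exact ⟨Ideal.Quotient.mk J b, hπmk b⟩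
  obtain ⟨s, hs⟩ := Module.projective_lifting_property π.toLinearMap LinearMap.id hπsurj
  -- the retraction `r : B/fB → N`
  have hmem : ∀ m : B ⧸ J, m - s (π.toLinearMap m) ∈ N := by
    intro m
    rw [← hker, LinearMap.mem_ker, map_sub]
    have h1 : π.toLinearMap (s (π.toLinearMap m)) = π.toLinearMap m :=
      LinearMap.congr_fun hs (π.toLinearMap m)
    rw [h1, sub_self]
  set r : (B ⧸ J) →ₗ[A] N :=
    LinearMap.codRestrict N (LinearMap.id - s ∘ₗ π.toLinearMap) hmem with hrdef
  have hr : r ∘ₗ N.subtype = LinearMap.id := by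
    ext n
    have hn : π.toLinearMap (N.subtype n) = 0 := by
      rw [← LinearMap.mem_ker, hker]; exact n.2
    have : (r (N.subtype n) : B ⧸ J) = (n : B ⧸ J) := by
      simp only [hrdef, LinearMap.codRestrict_apply, LinearMap.sub_apply, LinearMap.id_apply,
        LinearMap.comp_apply, hn, map_zero, sub_zero]
      rfl
    simpa using this
  -- `κ ⊗ N → κ ⊗ B/fB` is injective (split injection)
  have hinj : Function.Injective (LinearMap.lTensor κ N.subtype) := by
    have hcomp : (LinearMap.lTensor κ r) ∘ₗ (LinearMap.lTensor κ N.subtype) = LinearMap.id := by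
      rw [← LinearMap.lTensor_comp, hr, LinearMap.lTensor_id]
    exact Function.LeftInverse.injective
      (g := LinearMap.lTensor κ r) (fun x => LinearMap.congr_fun hcomp x)
  -- `κ ⊗ N → κ ⊗ B/fB` is zero, since the fiber ideal of `I` is generated by `f`
  have h1 : ∀ b ∈ I, (1 : κ) ⊗ₜ[A] (Ideal.Quotient.mk J b) = (0 : κ ⊗[A] (B ⧸ J)) := by
    intro b hb
    set Φ : (κ ⊗[A] B) →ₐ[A] (κ ⊗[A] (B ⧸ J)) :=
      Algebra.TensorProduct.map (AlgHom.id A κ) (Ideal.Quotient.mkₐ A J) with hΦdef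
    have hx : (Algebra.TensorProduct.includeRight : B →ₐ[A] κ ⊗[A] B) b ∈
        Ideal.span {(Algebra.TensorProduct.includeRight : B →ₐ[A] κ ⊗[A] B) f} := by
      rw [← hfiber]; exact Ideal.mem_map_of_mem _ hb
    rw [Ideal.mem_span_singleton] at hx
    obtain ⟨z, hz⟩ := hx
    have hf0 : Φ ((Algebra.TensorProduct.includeRight : B →ₐ[A] κ ⊗[A] B) f) = 0 := by
      have hmkf : Ideal.Quotient.mkₐ A J f = 0 := by
        rw [Ideal.Quotient.mkₐ_eq_mk, Ideal.Quotient.eq_zero_iff_mem, hJdef]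
        exact Ideal.subset_span rfl
      simp only [hΦdef, Algebra.TensorProduct.includeRight_apply,
        Algebra.TensorProduct.map_tmul, AlgHom.coe_id, id_eq, hmkf, tmul_zero]
    have hΦb : Φ ((Algebra.TensorProduct.includeRight : B →ₐ[A] κ ⊗[A] B) b) = 0 := by
      rw [hz, map_mul, hf0, zero_mul]
    simpa only [hΦdef, Algebra.TensorProduct.includeRight_apply,
      Algebra.TensorProduct.map_tmul, AlgHom.coe_id, id_eq,
      Ideal.Quotient.mkₐ_eq_mk] using hΦb
  have hzero : ∀ x : κ ⊗[A] N, LinearMap.lTensor κ N.subtype x = 0 := by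
    intro x
    induction x using TensorProduct.induction_on with
    | zero => simp
    | add a b ha hb => rw [map_add, ha, hb, add_zero]
    | tmul c n =>
      obtain ⟨n, hn⟩ := n
      obtain ⟨b, hb, rfl⟩ := (Ideal.mem_map_iff_of_surjective (Ideal.Quotient.mk J)
        Ideal.Quotient.mk_surjective).mp hn
      have : LinearMap.lTensor κ N.subtype (c ⊗ₜ[A] ⟨Ideal.Quotient.mk J b, hn⟩)
          = c ⊗ₜ[A] (Ideal.Quotient.mk J b) := rfl
      rw [this]
      have hc : c ⊗ₜ[A] (Ideal.Quotient.mk J b)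
          = c • ((1 : κ) ⊗ₜ[A] (Ideal.Quotient.mk J b) : κ ⊗[A] (B ⧸ J)) := by
        rw [smul_tmul', smul_eq_mul, mul_one]
      rw [hc, h1 b hb, smul_zero]
  haveI hsub : Subsingleton (κ ⊗[A] N) :=
    ⟨fun a b => hinj (by rw [hzero a, hzero b])⟩
  -- Nakayama: `N` localized at `p₀` vanishes
  haveI : Module.Finite A N := Module.Finite.iff_fg.mpr (IsNoetherian.noetherian N)
  haveI hsub2 : Subsingleton (κ ⊗[R'] (R' ⊗[A] N)) :=
    (TensorProduct.AlgebraTensorModule.cancelBaseChange A R' κ κ N).toEquiv.subsingleton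
  haveI hsub3 : Subsingleton (R' ⊗[A] N) :=
    (IsLocalRing.subsingleton_tensorProduct (R := R')).mp hsub2
  haveI hsub4 : Subsingleton (LocalizedModule p₀.asIdeal.primeCompl N) := by
    have e2 := (IsLocalizedModule.isBaseChange p₀.asIdeal.primeCompl R'
      (LocalizedModule.mkLinearMap p₀.asIdeal.primeCompl N)).equiv
    exact e2.symm.toEquiv.subsingleton
  have hns : ¬ (Module.annihilator A N ≤ p₀.asIdeal) := by
    intro hle
    exact (Module.notMem_support_iff.mpr hsub4)
      ((Module.mem_support_iff_of_finite (p := p₀)).mpr hle)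
  obtain ⟨g, hg_ann, hg⟩ := SetLike.not_le_iff_exists.mp hns
  -- `g` annihilates `I/fB`, i.e. `g • I ⊆ fB`
  have hgI : ∀ x ∈ I, ∃ b : B, algebraMap A B g * x = f * b := by
    intro x hx
    have hxN : (Ideal.Quotient.mk J x : B ⧸ J) ∈ N :=
      Ideal.mem_map_of_mem _ hx
    have hsm : g • (⟨Ideal.Quotient.mk J x, hxN⟩ : N) = 0 :=
      Module.mem_annihilator.mp hg_ann _
    have h0 : (Ideal.Quotient.mk J (g • x) : B ⧸ J) = 0 := by
      have hcast := congrArg (Subtype.val) hsm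
      have : g • (Ideal.Quotient.mk J x : B ⧸ J) = 0 := hcast
      rw [← this]
      exact map_smul (Ideal.Quotient.mkₐ A J) g x
    rw [Ideal.Quotient.eq_zero_iff_mem, hJdef, Ideal.mem_span_singleton] at h0
    obtain ⟨b, hb⟩ := h0
    exact ⟨b, by rw [← Algebra.smul_def]; exact hb⟩
  refine ⟨g, hg, ?_⟩
  have hunit : IsUnit (algebraMap B (Localization.Away (algebraMap A B g))
      (algebraMap A B g)) :=
    IsLocalization.map_units (Localization.Away (algebraMap A B g))
      (⟨algebraMap A B g, Submonoid.mem_powers _⟩ : Submonoid.powers (algebraMap A B g))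
  apply le_antisymm
  · rw [Ideal.map_le_iff_le_comap]
    intro x hx
    obtain ⟨b, hb⟩ := hgI x hx
    rw [Ideal.mem_comap, Ideal.mem_span_singleton]
    obtain ⟨u, hu⟩ := hunit
    have hbL := congrArg (algebraMap B (Localization.Away (algebraMap A B g))) hb
    rw [map_mul, map_mul, ← hu] at hbL
    refine ⟨(↑u⁻¹ : Localization.Away (algebraMap A B g))
      * algebraMap B (Localization.Away (algebraMap A B g)) b, ?_⟩
    have := (Units.eq_inv_mul_iff_mul_eq u).mpr hbL
    rw [this]; ring
  · rw [Ideal.span_le, Set.singleton_subset_iff]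
    exact Ideal.mem_map_of_mem _ hfI
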